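/- Let D(Q,R) = ℓ(Q) + ℓ(R) + d(Q,R). Suppose Q is good in the sense that whenever ℓ(Q) ≤ δ^r ℓ(R) one has d(Q,R) ≥ c ℓ(Q)^γ ℓ(R)^{1−γ}, and suppose the matrix element bound |T_{RQ}| ≤ C ℓ(Q)^α / (d(Q,R)^α sup_{z∈Q} λ(z,d(Q,R))) · ‖φ_Q‖₁‖ψ_R‖₁ holds when d(Q,R) ≥ CC₀ℓ(Q). Then for ℓ(Q) ≤ ℓ(R) and d(Q,R) ≥ CC₀ℓ(Q): |T_{RQ}| ≤ C' (ℓ(Q)^{α/2} ℓ(R)^{α/2}) / (D(Q,R)^α sup_{z∈Q} λ(z, D(Q,R))) · ‖φ_Q‖₁ ‖ψ_R‖₁. -/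

import Mathlib

open Real

/-- Iterated doubling. -/
lemma dbl_pow (Cl : ℝ) (hCl : 1 ≤ Cl) {X : Type} (lam : X → ℝ → ℝ)
    (hdbl : ∀ x ρ, 0 < ρ → lam x (2 * ρ) ≤ Cl * lam x ρ) :
    ∀ n : ℕ, ∀ x ρ, 0 < ρ → lam x (2 ^ n * ρ) ≤ Cl ^ n * lam x ρ := by
  intro n
  induction n with
  | zero => intro x ρ hρ; simp
  | succ n ih =>
    intro x ρ hρ
    have h1 : (2:ℝ) ^ (n+1) * ρ = 2 * (2 ^ n * ρ) := by ring
    have h2 : lam x (2 * (2 ^ n * ρ)) ≤ Cl * lam x (2 ^ n * ρ) :=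
      hdbl x _ (by positivity)
    have h3 := ih x ρ hρ
    calc lam x (2 ^ (n+1) * ρ) = lam x (2 * (2 ^ n * ρ)) := by rw [h1]
      _ ≤ Cl * lam x (2 ^ n * ρ) := h2
      _ ≤ Cl * (Cl ^ n * lam x ρ) := by
          apply mul_le_mul_of_nonneg_left h3 (by linarith)
      _ = Cl ^ (n+1) * lam x ρ := by ring

/-- Scaling bound from doubling. -/
lemma dbl_scale (Cl : ℝ) (hCl : 1 ≤ Cl) {X : Type} (lam : X → ℝ → ℝ)
    (hmono : ∀ x ρ σ, 0 < ρ → ρ ≤ σ → lam x ρ ≤ lam x σ)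
    (hdbl : ∀ x ρ, 0 < ρ → lam x (2 * ρ) ≤ Cl * lam x ρ)
    (x : X) (ρ t : ℝ) (hρ : 0 < ρ) (ht : 1 ≤ t) (hlam : 0 ≤ lam x ρ) :
    lam x (t * ρ) ≤ Cl * t ^ (Real.logb 2 Cl) * lam x ρ := by
  have ht0 : 0 < t := lt_of_lt_of_le one_pos ht
  have hCl0 : 0 < Cl := lt_of_lt_of_le one_pos hCl
  set n : ℕ := ⌈Real.logb 2 t⌉₊ with hn
  have hlog0 : 0 ≤ Real.logb 2 t := Real.logb_nonneg one_lt_two ht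
  have hle : Real.logb 2 t ≤ (n : ℝ) := Nat.le_ceil _
  have hlt : (n : ℝ) ≤ Real.logb 2 t + 1 := le_of_lt (Nat.ceil_lt_add_one hlog0)
  have ht2 : t ≤ 2 ^ n := by
    have h1 : t = (2:ℝ) ^ (Real.logb 2 t) := (Real.rpow_logb two_pos (by norm_num) ht0).symm
    have h2 : (2:ℝ) ^ (Real.logb 2 t) ≤ (2:ℝ) ^ ((n:ℝ)) :=
      Real.rpow_le_rpow_of_exponent_le one_le_two hle
    rw [h1]
    calc (2:ℝ) ^ Real.logb 2 t ≤ (2:ℝ) ^ ((n:ℝ)) := h2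
      _ = 2 ^ n := by rw [Real.rpow_natCast]
  have h3 : lam x (t * ρ) ≤ lam x (2 ^ n * ρ) := by
    apply hmono x _ _ (by positivity)
    nlinarith
  have h4 : lam x (2 ^ n * ρ) ≤ Cl ^ n * lam x ρ := dbl_pow Cl hCl lam hdbl n x ρ hρ
  have h5 : Cl ^ n ≤ Cl * t ^ (Real.logb 2 Cl) := by
    have e4 : Cl ^ (Real.logb 2 t) = t ^ (Real.logb 2 Cl) := by
      rw [Real.rpow_def_of_pos hCl0, Real.rpow_def_of_pos ht0, Real.logb, Real.logb]
      ring_nf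
    calc (Cl:ℝ) ^ n = Cl ^ ((n:ℝ)) := by rw [Real.rpow_natCast]
      _ ≤ Cl ^ (Real.logb 2 t + 1) := Real.rpow_le_rpow_of_exponent_le hCl hlt
      _ = Cl * Cl ^ (Real.logb 2 t) := by rw [Real.rpow_add hCl0, Real.rpow_one]; ring
      _ = Cl * t ^ (Real.logb 2 Cl) := by rw [e4]
  calc lam x (t * ρ) ≤ Cl ^ n * lam x ρ := le_trans h3 h4
    _ ≤ Cl * t ^ (Real.logb 2 Cl) * lam x ρ := mul_le_mul_of_nonneg_right h5 hlam

set_option maxHeartbeats 1600000 in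
/-- Let `D(Q,R) = ℓQ + ℓR + d(Q,R)`. If `Q` is good (whenever
`ℓQ ≤ δ^r ℓR` one has `d(Q,R) ≥ c ℓQ^γ ℓR^{1−γ}`) and the separated matrix element bound
`|T_{RQ}| ≤ C ℓQ^α / (d(Q,R)^α · sup_{z∈Q} lam(z, d(Q,R))) ‖φQ‖₁ ‖ψR‖₁` holds whenever
`d(Q,R) ≥ C C₀ ℓQ`, then for `ℓQ ≤ ℓR` and `d(Q,R) ≥ C C₀ ℓQ`:
`|T_{RQ}| ≤ C' ℓQ^{α/2} ℓR^{α/2} / (D(Q,R)^α · sup_{z∈Q} lam(z, D(Q,R))) ‖φQ‖₁ ‖ψR‖₁`. -/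
theorem stmt12 (Cl α δ c C C₀ : ℝ) (r : ℕ) (d γ : ℝ)
    (hCl : 1 ≤ Cl) (hα : 0 < α) (hδ0 : 0 < δ) (hδ1 : δ < 1)
    (hc : 0 < c) (hC : 0 < C) (hC₀ : 0 < C₀)
    (hd : d = Real.logb 2 Cl) (hγ : γ = α / (2 * (α + d))) :
    ∃ C' : ℝ, 0 < C' ∧
      ∀ (X : Type) [MetricSpace X] (lam : X → ℝ → ℝ),
        (∀ x ρ, 0 < ρ → 0 < lam x ρ) →
        (∀ x ρ σ, 0 < ρ → ρ ≤ σ → lam x ρ ≤ lam x σ) →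
        (∀ x ρ, 0 < ρ → lam x (2 * ρ) ≤ Cl * lam x ρ) →
        ∀ (Q : Set X), Q.Nonempty →
        ∀ (ℓQ ℓR dQR nφ nψ : ℝ) (T : ℂ),
        0 < ℓQ → 0 < ℓR → ℓQ ≤ ℓR → 0 ≤ nφ → 0 ≤ nψ →
        0 < dQR → dQR ≥ C * C₀ * ℓQ →
        (ℓQ ≤ δ ^ r * ℓR → dQR ≥ c * ℓQ ^ γ * ℓR ^ (1 - γ)) →
        ∀ (ΛdQR ΛD : ℝ),
        IsLUB ((fun z => lam z dQR) '' Q) ΛdQR →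
        IsLUB ((fun z => lam z (ℓQ + ℓR + dQR)) '' Q) ΛD →
        ‖T‖ ≤ C * (ℓQ ^ α / (dQR ^ α * ΛdQR)) * nφ * nψ →
        ‖T‖ ≤ C' * (ℓQ ^ (α / 2) * ℓR ^ (α / 2) /
          ((ℓQ + ℓR + dQR) ^ α * ΛD)) * nφ * nψ := by
  have hd0 : 0 ≤ d := hd ▸ Real.logb_nonneg one_lt_two hCl
  have hαd : 0 < α + d := by linarith
  have hδr : (0:ℝ) < δ ^ r := pow_pos hδ0 r
  set K : ℝ := max (1 + 2 / (C * C₀ * δ ^ r)) (1 + 2 / c) with hK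
  have hK1 : 1 ≤ K := le_max_of_le_right (by
    have : 0 < 2 / c := by positivity
    linarith)
  have hK0 : 0 < K := lt_of_lt_of_le one_pos hK1
  refine ⟨C * Cl * K ^ (α + d), by positivity, ?_⟩
  clear_value K
  intro X _ lam hpos hmono hdbl Q hQ ℓQ ℓR dQR nφ nψ T hℓQ hℓR hℓ hnφ hnψ hdQR hsep hgood
    ΛdQR ΛD hlub1 hlub2 hT
  obtain ⟨z₀, hz₀⟩ := hQ
  set D : ℝ := ℓQ + ℓR + dQR with hD
  have hDpos : 0 < D := by positivity
  set t : ℝ := D / dQR with htdef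
  clear_value D t
  have ht1 : 1 ≤ t := by
    rw [htdef, le_div_iff₀ hdQR]; simp only [one_mul, hD]; linarith
  have ht0 : 0 < t := lt_of_lt_of_le one_pos ht1
  have hΛ1 : 0 < ΛdQR := lt_of_lt_of_le (hpos z₀ dQR hdQR) (hlub1.1 ⟨z₀, hz₀, rfl⟩)
  have hΛ2 : 0 < ΛD := lt_of_lt_of_le (hpos z₀ D hDpos) (hlub2.1 ⟨z₀, hz₀, rfl⟩)
  have hDt : D = t * dQR := by
    rw [htdef]; exact (div_mul_cancel₀ _ (ne_of_gt hdQR)).symm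
  -- doubling estimate on the sup
  have hΛle : ΛD ≤ Cl * t ^ d * ΛdQR := by
    apply hlub2.2
    rintro y ⟨z, hz, rfl⟩
    show lam z D ≤ Cl * t ^ d * ΛdQR
    rw [hDt, hd]
    calc lam z (t * dQR) ≤ Cl * t ^ Real.logb 2 Cl * lam z dQR :=
          dbl_scale Cl hCl lam hmono hdbl z dQR t hdQR ht1 (le_of_lt (hpos z dQR hdQR))
      _ ≤ Cl * t ^ Real.logb 2 Cl * ΛdQR := by
          apply mul_le_mul_of_nonneg_left (hlub1.1 ⟨z, hz, rfl⟩)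
          positivity
  -- key scalar inequality
  have hkey : t ^ (α + d) * ℓQ ^ (α/2) ≤ K ^ (α + d) * ℓR ^ (α/2) := by
    by_cases hcase : ℓQ ≤ δ ^ r * ℓR
    · -- good case
      have hdg := hgood hcase
      have hγpos : 0 < γ := by rw [hγ]; positivity
      have hℓQγ : (0:ℝ) < ℓQ ^ γ := Real.rpow_pos_of_pos hℓQ _
      have hℓR1γ : (0:ℝ) < ℓR ^ (1 - γ) := Real.rpow_pos_of_pos hℓR _
      set s : ℝ := (ℓR / ℓQ) ^ γ with hs
      have hsq : 1 ≤ ℓR / ℓQ := (one_le_div hℓQ).2 hℓ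
      have hs1 : 1 ≤ s := Real.one_le_rpow hsq (le_of_lt hγpos)
      have hs0 : 0 < s := lt_of_lt_of_le one_pos hs1
      clear_value s
      have hsplit : ℓR = ℓR ^ γ * ℓR ^ (1 - γ) := by
        rw [← Real.rpow_add hℓR]; norm_num
      have hsval : s = ℓR ^ γ / ℓQ ^ γ := by
        rw [hs, Real.div_rpow (le_of_lt hℓR) (le_of_lt hℓQ)]
      have hfrac : ℓR / dQR ≤ (1/c) * s := by
        have h2 : (0:ℝ) < c * ℓQ ^ γ * ℓR ^ (1 - γ) := by positivity
        have h3 : ℓR / dQR ≤ ℓR / (c * ℓQ ^ γ * ℓR ^ (1 - γ)) :=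
          div_le_div_of_nonneg_left (le_of_lt hℓR) h2 hdg
        have h4 : ℓR / (c * ℓQ ^ γ * ℓR ^ (1 - γ)) = (1/c) * s := by
          have e : (1/c) * s = ℓR ^ γ / (c * ℓQ ^ γ) := by rw [hsval]; ring
          rw [e, div_eq_div_iff (ne_of_gt h2) (by positivity)]
          linear_combination c * ℓQ ^ γ * hsplit
        linarith [h3, h4.le, h4.ge]
      have htle : t ≤ K * s := by
        have h5 : t ≤ 1 + 2 * (ℓR / dQR) := by
          rw [htdef, hD, div_le_iff₀ hdQR]
          have : ℓR / dQR * dQR = ℓR := div_mul_cancel₀ _ (ne_of_gt hdQR)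
          nlinarith
        have h6 : 1 + 2 * (ℓR / dQR) ≤ 1 + (2/c) * s := by
          have e : 2 * ((1/c)*s) = (2/c) * s := by ring
          nlinarith [hfrac]
        have h7 : 1 + (2/c) * s ≤ (1 + 2/c) * s := by nlinarith [hs1]
        have h8 : (1 + 2/c) * s ≤ K * s :=
          mul_le_mul_of_nonneg_right (by rw [hK]; exact le_max_right _ _) (le_of_lt hs0)
        linarith
      have h9 : t ^ (α + d) ≤ (K * s) ^ (α + d) :=
        Real.rpow_le_rpow (le_of_lt ht0) htle (le_of_lt hαd)
      have h10 : (K * s) ^ (α + d) = K ^ (α + d) * s ^ (α + d) :=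
        Real.mul_rpow (le_of_lt hK0) (le_of_lt hs0)
      have hγαd : γ * (α + d) = α / 2 := by
        rw [hγ]; field_simp
      have h11 : s ^ (α + d) = ℓR ^ (α/2) / ℓQ ^ (α/2) := by
        rw [hs, ← Real.rpow_mul (by positivity : (0:ℝ) ≤ ℓR / ℓQ), hγαd,
          Real.div_rpow (le_of_lt hℓR) (le_of_lt hℓQ)]
      have hℓQh : (0:ℝ) < ℓQ ^ (α/2) := Real.rpow_pos_of_pos hℓQ _
      have hℓRh : (0:ℝ) < ℓR ^ (α/2) := Real.rpow_pos_of_pos hℓR _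
      have hKad : (0:ℝ) < K ^ (α + d) := Real.rpow_pos_of_pos hK0 _
      have h12 : t ^ (α + d) ≤ K ^ (α + d) * (ℓR ^ (α/2) / ℓQ ^ (α/2)) := by
        rw [← h11]; linarith [h9, h10.le]
      calc t ^ (α + d) * ℓQ ^ (α/2)
          ≤ (K ^ (α + d) * (ℓR ^ (α/2) / ℓQ ^ (α/2))) * ℓQ ^ (α/2) :=
            mul_le_mul_of_nonneg_right h12 (le_of_lt hℓQh)
        _ = K ^ (α + d) * ℓR ^ (α/2) := by
            rw [mul_assoc, div_mul_cancel₀ _ (ne_of_gt hℓQh)]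
    · -- non-good case
      push_neg at hcase
      have h1 : ℓR / dQR ≤ 1 / (C * C₀ * δ ^ r) := by
        have h2 : C * C₀ * δ ^ r * ℓR ≤ C * C₀ * ℓQ := by
          nlinarith [mul_lt_mul_of_pos_left hcase (mul_pos hC hC₀)]
        have h3 : C * C₀ * δ ^ r * ℓR ≤ dQR := le_trans h2 hsep
        rw [div_le_div_iff₀ hdQR (by positivity)]
        nlinarith
      have htle : t ≤ K := by
        have h5 : t ≤ 1 + 2 * (ℓR / dQR) := by
          rw [htdef, hD, div_le_iff₀ hdQR]
          have : ℓR / dQR * dQR = ℓR := div_mul_cancel₀ _ (ne_of_gt hdQR)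
          nlinarith
        have : 1 + 2 * (ℓR / dQR) ≤ 1 + 2 / (C * C₀ * δ ^ r) := by
          have e : 2 / (C * C₀ * δ ^ r) = 2 * (1 / (C * C₀ * δ ^ r)) := by ring
          linarith [h1, e.le, e.ge]
        exact le_trans h5 (le_trans this (by rw [hK]; exact le_max_left _ _))
      have h9 : t ^ (α + d) ≤ K ^ (α + d) :=
        Real.rpow_le_rpow (le_of_lt ht0) htle (le_of_lt hαd)
      have h10 : ℓQ ^ (α/2) ≤ ℓR ^ (α/2) :=
        Real.rpow_le_rpow (le_of_lt hℓQ) hℓ (by positivity)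
      have hp1 : 0 < t ^ (α + d) := Real.rpow_pos_of_pos ht0 _
      have hp2 : 0 < ℓQ ^ (α/2) := Real.rpow_pos_of_pos hℓQ _
      nlinarith
  -- final assembly
  have hDα : D ^ α = t ^ α * dQR ^ α := by
    rw [hDt, Real.mul_rpow (le_of_lt ht0) (le_of_lt hdQR)]
  have htad : t ^ α * t ^ d = t ^ (α + d) := (Real.rpow_add ht0 α d).symm
  have hQsplit : ℓQ ^ (α/2) * ℓQ ^ (α/2) = ℓQ ^ α := by
    rw [← Real.rpow_add hℓQ]; norm_num
  have hcore : C * ℓQ ^ α * (D ^ α * ΛD) ≤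
      C * Cl * K ^ (α + d) * (ℓQ ^ (α/2) * ℓR ^ (α/2)) * (dQR ^ α * ΛdQR) := by
    have htα : (0:ℝ) < t ^ α := Real.rpow_pos_of_pos ht0 _
    have htd : (0:ℝ) < t ^ d := Real.rpow_pos_of_pos ht0 _
    have hdα : (0:ℝ) < dQR ^ α := Real.rpow_pos_of_pos hdQR _
    have hℓQh : (0:ℝ) < ℓQ ^ (α/2) := Real.rpow_pos_of_pos hℓQ _
    calc C * ℓQ ^ α * (D ^ α * ΛD)
        = (C * (ℓQ ^ (α/2) * ℓQ ^ (α/2))) * ((t ^ α * dQR ^ α) * ΛD) := by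
          rw [hDα, hQsplit]
      _ ≤ (C * (ℓQ ^ (α/2) * ℓQ ^ (α/2))) * ((t ^ α * dQR ^ α) * (Cl * t ^ d * ΛdQR)) := by
          apply mul_le_mul_of_nonneg_left
            (mul_le_mul_of_nonneg_left hΛle (by positivity)) (by positivity)
      _ = C * Cl * ((t ^ α * t ^ d) * ℓQ ^ (α/2)) * ℓQ ^ (α/2) * (dQR ^ α * ΛdQR) := by
          ring
      _ = C * Cl * (t ^ (α + d) * ℓQ ^ (α/2)) * ℓQ ^ (α/2) * (dQR ^ α * ΛdQR) := by
          rw [htad]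
      _ ≤ C * Cl * (K ^ (α + d) * ℓR ^ (α/2)) * ℓQ ^ (α/2) * (dQR ^ α * ΛdQR) := by
          apply mul_le_mul_of_nonneg_right
          apply mul_le_mul_of_nonneg_right
            (mul_le_mul_of_nonneg_left hkey (by positivity)) (le_of_lt hℓQh)
          positivity
      _ = C * Cl * K ^ (α + d) * (ℓQ ^ (α/2) * ℓR ^ (α/2)) * (dQR ^ α * ΛdQR) := by
          ring
  have h1 : C * (ℓQ ^ α / (dQR ^ α * ΛdQR)) ≤
      C * Cl * K ^ (α + d) * (ℓQ ^ (α/2) * ℓR ^ (α/2) / (D ^ α * ΛD)) := by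
    rw [← mul_div_assoc, ← mul_div_assoc,
      div_le_div_iff₀ (by positivity) (by positivity)]
    exact hcore
  exact hT.trans (mul_le_mul_of_nonneg_right (mul_le_mul_of_nonneg_right h1 hnφ) hnψ)
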